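/- Let k > 0 and let d_tot > 0, d_rad be real numbers with |d_rad| ≤ d_tot. Define F = (1/k)·log(cosh(k·d_tot) + (d_rad/d_tot)·sinh(k·d_tot)), J_min = (1/(2·d_tot²))·(d_tot - sinh(k·d_tot)/(k·(cosh(k·d_tot) + sinh(k·d_tot)))), and J_max = (1/(2·d_tot²))·(-d_tot + sinh(k·d_tot)/(k·(cosh(k·d_tot) - sinh(k·d_tot)))). Then d_rad + J_min·(d_tot² - d_rad²) ≤ F ≤ d_rad + J_max·(d_tot² - d_rad²). -/

import Mathlib

open Set

lemma aux_nonneg (H H' H'' : ℝ → ℝ)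
    (hd1 : ∀ x ∈ Icc (-1:ℝ) 1, HasDerivAt H (H' x) x)
    (hd2 : ∀ x ∈ Icc (-1:ℝ) 1, HasDerivAt H' (H'' x) x)
    (hmono : MonotoneOn H'' (Icc (-1:ℝ) 1))
    (hHm1 : H (-1) = 0) (hH1 : H 1 = 0) (hH'1 : H' 1 = 0) :
    ∀ x ∈ Icc (-1:ℝ) 1, 0 ≤ H x := by
  have hcont : ContinuousOn H (Icc (-1:ℝ) 1) :=
    fun x hx => (hd1 x hx).continuousAt.continuousWithinAt
  have hcont' : ContinuousOn H' (Icc (-1:ℝ) 1) :=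
    fun x hx => (hd2 x hx).continuousAt.continuousWithinAt
  have hconv : ConvexOn ℝ (Icc (-1:ℝ) 1) H' := by
    apply MonotoneOn.convexOn_of_deriv (convex_Icc _ _) hcont'
    · rw [interior_Icc]
      exact fun x hx => ((hd2 x (Ioo_subset_Icc_self hx)).differentiableAt).differentiableWithinAt
    · rw [interior_Icc]
      intro x hx y hy hxy
      rw [(hd2 x (Ioo_subset_Icc_self hx)).deriv, (hd2 y (Ioo_subset_Icc_self hy)).deriv]
      exact hmono (Ioo_subset_Icc_self hx) (Ioo_subset_Icc_self hy) hxy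
  obtain ⟨c, hc, hc0⟩ := exists_hasDerivAt_eq_zero (f := H) (f' := H')
    (by norm_num : (-1:ℝ) < 1) hcont (hHm1.trans hH1.symm)
    (fun x hx => hd1 x (Ioo_subset_Icc_self hx))
  have hcI : c ∈ Icc (-1:ℝ) 1 := Ioo_subset_Icc_self hc
  -- H' ≤ 0 on [c,1]
  have hA : ∀ x ∈ Icc c 1, H' x ≤ 0 := by
    intro x hx
    rcases eq_or_lt_of_le hx.2 with h1 | h1
    · rw [h1, hH'1]
    rcases eq_or_lt_of_le hx.1 with h2 | h2
    · rw [← h2, hc0]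
    have h1c : (0:ℝ) < 1 - c := by linarith
    have ht : ((1 - x)/(1 - c)) * c + ((x - c)/(1 - c)) * 1 = x := by
      rw [div_mul_eq_mul_div, div_mul_eq_mul_div, ← add_div, div_eq_iff h1c.ne']
      ring
    have := hconv.2 hcI (right_mem_Icc.mpr (by norm_num : (-1:ℝ) ≤ 1))
      (div_nonneg (by linarith : (0:ℝ) ≤ 1 - x) h1c.le)
      (div_nonneg (by linarith : (0:ℝ) ≤ x - c) h1c.le)
      (by rw [← add_div, div_eq_iff h1c.ne']; ring)
    simp only [smul_eq_mul] at this
    rw [ht, hc0, hH'1] at this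
    simpa using this
  -- H' ≥ 0 on [-1,c]
  have hB : ∀ x ∈ Icc (-1:ℝ) c, 0 ≤ H' x := by
    intro x hx
    rcases eq_or_lt_of_le hx.2 with h2 | h2
    · rw [h2, hc0]
    have hxI : x ∈ Icc (-1:ℝ) 1 := ⟨hx.1, by linarith [hc.2]⟩
    have hs := hconv.slope_mono_adjacent hxI (right_mem_Icc.mpr (by norm_num : (-1:ℝ) ≤ 1)) h2 hc.2
    rw [hc0, hH'1] at hs
    have hcx : (0:ℝ) < c - x := by linarith
    have h1c : (0:ℝ) < 1 - c := by linarith [hc.2]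
    have : (0 - H' x) / (c - x) ≤ 0 := by
      simpa using hs.trans_eq (by simp)
    have h := (div_le_iff₀ hcx).mp this
    linarith
  -- H monotone on [-1,c], antitone on [c,1]
  have hsub1 : Icc (-1:ℝ) c ⊆ Icc (-1:ℝ) 1 := Icc_subset_Icc_right hcI.2
  have hsub2 : Icc c 1 ⊆ Icc (-1:ℝ) 1 := Icc_subset_Icc_left hcI.1
  have hC : MonotoneOn H (Icc (-1:ℝ) c) := by
    apply monotoneOn_of_deriv_nonneg (convex_Icc _ _) (hcont.mono hsub1)
    · rw [interior_Icc]
      exact fun x hx =>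
        ((hd1 x (hsub1 (Ioo_subset_Icc_self hx))).differentiableAt).differentiableWithinAt
    · rw [interior_Icc]
      intro x hx
      rw [(hd1 x (hsub1 (Ioo_subset_Icc_self hx))).deriv]
      exact hB x (Ioo_subset_Icc_self hx)
  have hD : AntitoneOn H (Icc c 1) := by
    apply antitoneOn_of_deriv_nonpos (convex_Icc _ _) (hcont.mono hsub2)
    · rw [interior_Icc]
      exact fun x hx =>
        ((hd1 x (hsub2 (Ioo_subset_Icc_self hx))).differentiableAt).differentiableWithinAt
    · rw [interior_Icc]
      intro x hx
      rw [(hd1 x (hsub2 (Ioo_subset_Icc_self hx))).deriv]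
      exact hA x (Ioo_subset_Icc_self hx)
  intro x hx
  rcases le_total x c with h | h
  · have := hC (left_mem_Icc.mpr (by linarith [hcI.1] : (-1:ℝ) ≤ c)) ⟨hx.1, h⟩ hx.1
    rw [hHm1] at this
    exact this
  · have := hD ⟨h, hx.2⟩ (right_mem_Icc.mpr hcI.2) hx.2
    rw [hH1] at this
    exact this

lemma conc_lower (a lam s c : ℝ) (hs : 0 < s) (hcs : 0 < c - s)
    (h1 : Real.log (c + s) = a) (hm1 : Real.log (c - s) = -a)
    (hslope : s / (c + s) = a - 2 * lam) :
    ∀ u ∈ Icc (-1:ℝ) 1, a * u + lam * (1 - u ^ 2) ≤ Real.log (c + u * s) := by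
  have hpos : ∀ x ∈ Icc (-1:ℝ) 1, 0 < c + x * s := by
    intro x hx
    nlinarith [hx.1, hx.2]
  have key := aux_nonneg
    (fun u => Real.log (c + u * s) - a * u - lam * (1 - u ^ 2))
    (fun u => s / (c + u * s) - a + 2 * lam * u)
    (fun u => -(s * s) / (c + u * s) ^ 2 + 2 * lam)
    (by
      intro x hx
      have hp := hpos x hx
      have h1' : HasDerivAt (fun u : ℝ => c + u * s) s x := by
        simpa using ((hasDerivAt_id x).mul_const s).const_add c
      have h2 := h1'.log hp.ne'
      have h3 : HasDerivAt (fun u : ℝ => a * u) a x := by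
        simpa using (hasDerivAt_id x).const_mul a
      have h4 : HasDerivAt (fun u : ℝ => lam * (1 - u ^ 2)) (lam * -(2 * x)) x := by
        have h := ((hasDerivAt_pow 2 x).const_sub 1).const_mul lam
        norm_num at h
        exact h.congr_deriv (by ring)
      exact ((h2.sub h3).sub h4).congr_deriv (by ring)
    )
    (by
      intro x hx
      have hp := hpos x hx
      have h1' : HasDerivAt (fun u : ℝ => c + u * s) s x := by
        simpa using ((hasDerivAt_id x).mul_const s).const_add c
      have h2 : HasDerivAt (fun u : ℝ => s / (c + u * s))
          ((0 * (c + x * s) - s * s) / (c + x * s) ^ 2) x :=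
        (hasDerivAt_const x s).div h1' hp.ne'
      have h3 : HasDerivAt (fun u : ℝ => a) 0 x := hasDerivAt_const x a
      have h4 : HasDerivAt (fun u : ℝ => 2 * lam * u) (2 * lam) x := by
        simpa using (hasDerivAt_id x).const_mul (2 * lam)
      exact ((h2.sub h3).add h4).congr_deriv (by ring)
    )
    (by
      intro x hx y hy hxy
      have hpx := hpos x hx
      have hpy := hpos y hy
      have hle : c + x * s ≤ c + y * s := by nlinarith
      have : (s * s) / (c + y * s) ^ 2 ≤ (s * s) / (c + x * s) ^ 2 := by
        gcongr
      simp only [neg_div]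
      linarith
    )
    (by
      show Real.log (c + (-1) * s) - a * (-1) - lam * (1 - (-1 : ℝ) ^ 2) = 0
      rw [show c + (-1) * s = c - s from by ring, hm1]; ring
    )
    (by
      show Real.log (c + 1 * s) - a * 1 - lam * (1 - (1 : ℝ) ^ 2) = 0
      rw [show c + 1 * s = c + s from by ring, h1]; ring
    )
    (by
      show s / (c + 1 * s) - a + 2 * lam * 1 = 0
      rw [show c + 1 * s = c + s from by ring, hslope]; ring
    )
  intro u hu
  have := key u hu
  linarith

lemma conc_upper (a mu s c : ℝ) (hs : 0 < s) (hcs : 0 < c - s)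
    (h1 : Real.log (c + s) = a) (hm1 : Real.log (c - s) = -a)
    (hslope : s / (c - s) = a + 2 * mu) :
    ∀ u ∈ Icc (-1:ℝ) 1, Real.log (c + u * s) ≤ a * u + mu * (1 - u ^ 2) := by
  have hpos : ∀ x ∈ Icc (-1:ℝ) 1, 0 < c - x * s := by
    intro x hx
    nlinarith [hx.1, hx.2]
  have key := aux_nonneg
    (fun u => -(a * u) + mu * (1 - u ^ 2) - Real.log (c - u * s))
    (fun u => -a - 2 * mu * u + s / (c - u * s))
    (fun u => (s * s) / (c - u * s) ^ 2 - 2 * mu)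
    (by
      intro x hx
      have hp := hpos x hx
      have h1' : HasDerivAt (fun u : ℝ => c - u * s) (-s) x := by
        simpa using (((hasDerivAt_id x).mul_const s).const_sub c)
      have h2 := h1'.log hp.ne'
      have h3 : HasDerivAt (fun u : ℝ => a * u) a x := by
        simpa using (hasDerivAt_id x).const_mul a
      have h4 : HasDerivAt (fun u : ℝ => mu * (1 - u ^ 2)) (mu * -(2 * x)) x := by
        have h := ((hasDerivAt_pow 2 x).const_sub 1).const_mul mu
        norm_num at h
        exact h.congr_deriv (by ring)
      exact ((h3.neg.add h4).sub h2).congr_deriv (by ring)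
    )
    (by
      intro x hx
      have hp := hpos x hx
      have h1' : HasDerivAt (fun u : ℝ => c - u * s) (-s) x := by
        simpa using (((hasDerivAt_id x).mul_const s).const_sub c)
      have h2 : HasDerivAt (fun u : ℝ => s / (c - u * s))
          ((0 * (c - x * s) - s * (-s)) / (c - x * s) ^ 2) x :=
        (hasDerivAt_const x s).div h1' hp.ne'
      have h3 : HasDerivAt (fun u : ℝ => -a - 2 * mu * u) (-(2 * mu)) x := by
        simpa using ((hasDerivAt_id x).const_mul (2 * mu)).const_sub (-a)
      exact (h3.add h2).congr_deriv (by ring)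
    )
    (by
      intro x hx y hy hxy
      have hpx := hpos x hx
      have hpy := hpos y hy
      have hle : c - y * s ≤ c - x * s := by nlinarith
      have : (s * s) / (c - x * s) ^ 2 ≤ (s * s) / (c - y * s) ^ 2 := by
        gcongr
      linarith
    )
    (by
      show -(a * (-1)) + mu * (1 - (-1 : ℝ) ^ 2) - Real.log (c - (-1) * s) = 0
      rw [show c - (-1) * s = c + s from by ring, h1]; ring
    )
    (by
      show -(a * 1) + mu * (1 - (1 : ℝ) ^ 2) - Real.log (c - 1 * s) = 0
      rw [show c - 1 * s = c - s from by ring, hm1]; ring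
    )
    (by
      show -a - 2 * mu * 1 + s / (c - 1 * s) = 0
      rw [show c - 1 * s = c - s from by ring, hslope]; ring
    )
  intro u hu
  have := key (-u) (by constructor <;> [linarith [hu.2]; linarith [hu.1]])
  simp only [neg_neg, mul_neg, neg_mul, neg_sq] at this
  have harg : c - -(u * s) = c + u * s := by ring
  rw [harg] at this
  linarith

theorem F_between_Jmin_Jmax (k dtot drad : ℝ) (hk : 0 < k) (hdtot : 0 < dtot)
    (hdrad : |drad| ≤ dtot) :
    drad + (1 / (2 * dtot ^ 2)) *
        (dtot - Real.sinh (k * dtot) / (k * (Real.cosh (k * dtot) + Real.sinh (k * dtot)))) *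
        (dtot ^ 2 - drad ^ 2) ≤
      (1 / k) * Real.log (Real.cosh (k * dtot) + (drad / dtot) * Real.sinh (k * dtot)) ∧
    (1 / k) * Real.log (Real.cosh (k * dtot) + (drad / dtot) * Real.sinh (k * dtot)) ≤
      drad + (1 / (2 * dtot ^ 2)) *
        (-dtot + Real.sinh (k * dtot) / (k * (Real.cosh (k * dtot) - Real.sinh (k * dtot)))) *
        (dtot ^ 2 - drad ^ 2) := by
  have hapos : 0 < k * dtot := mul_pos hk hdtot
  set a := k * dtot with ha
  set s := Real.sinh a with hsdef
  set c := Real.cosh a with hcdef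
  have hs : 0 < s := Real.sinh_pos_iff.mpr hapos
  have hcps : c + s = Real.exp a := Real.cosh_add_sinh a
  have hcms : c - s = Real.exp (-a) := Real.cosh_sub_sinh a
  have hcs : 0 < c - s := by rw [hcms]; exact Real.exp_pos _
  have hcps' : 0 < c + s := by rw [hcps]; exact Real.exp_pos _
  have h1 : Real.log (c + s) = a := by rw [hcps, Real.log_exp]
  have hm1 : Real.log (c - s) = -a := by rw [hcms, Real.log_exp]
  rw [abs_le] at hdrad
  have hu : drad / dtot ∈ Icc (-1:ℝ) 1 := by
    constructor
    · rw [le_div_iff₀ hdtot]; linarith [hdrad.1]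
    · rw [div_le_iff₀ hdtot]; linarith [hdrad.2]
  have lower := conc_lower a ((a - s / (c + s)) / 2) s c hs hcs h1 hm1 (by ring)
    (drad / dtot) hu
  have upper := conc_upper a ((s / (c - s) - a) / 2) s c hs hcs h1 hm1 (by ring)
    (drad / dtot) hu
  have hkne : k ≠ 0 := hk.ne'
  have hdne : dtot ≠ 0 := hdtot.ne'
  constructor
  · have eq1 : drad + (1 / (2 * dtot ^ 2)) * (dtot - s / (k * (c + s))) * (dtot ^ 2 - drad ^ 2)
        = (1 / k) * (a * (drad / dtot)
          + ((a - s / (c + s)) / 2) * (1 - (drad / dtot) ^ 2)) := by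
      rw [ha]
      field_simp
    rw [eq1]
    exact mul_le_mul_of_nonneg_left lower (by positivity)
  · have eq2 : drad + (1 / (2 * dtot ^ 2)) * (-dtot + s / (k * (c - s))) * (dtot ^ 2 - drad ^ 2)
        = (1 / k) * (a * (drad / dtot)
          + ((s / (c - s) - a) / 2) * (1 - (drad / dtot) ^ 2)) := by
      rw [ha]
      field_simp
      ring
    rw [eq2]
    exact mul_le_mul_of_nonneg_left upper (by positivity)
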